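/- arXiv:1511.06232 — 6 statements merged into one kernel-verified Lean document; each statement's English description precedes it below -/
import Mathlib

section
/- For every separable real Hilbert space H there exist a separable real Hilbert space E and an injective continuous linear map i : H → E with dense range which is Hilbert–Schmidt, i.e. there is a Hilbert basis (e_n)_{n∈ι} of H indexed by a countable type ι such that ∑_{n∈ι} ‖i(e_n)‖²_E < ∞. -/
noncomputable section

open scoped ENNReal

/-- An orthonormal family in a separable inner product space has countable index type. -/
lemma gelfand_aux_countable {H : Type*} [NormedAddCommGroup H] [InnerProductSpace ℝ H]
    [TopologicalSpace.SeparableSpace H] {ι : Type*} {v : ι → H}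
    (hv : Orthonormal ℝ v) : Countable ι := by
  obtain ⟨s, hsc, hsd⟩ := TopologicalSpace.exists_countable_dense H
  have hdist : ∀ i j : ι, i ≠ j → (2 : ℝ) = dist (v i) (v j) ^ 2 := by
    intro i j hij
    rw [dist_eq_norm, norm_sub_sq_real, hv.1 i, hv.1 j, hv.2 hij]
    norm_num
  have hchoice : ∀ i : ι, ∃ y ∈ s, dist (v i) y < 1 / 2 :=
    fun i => hsd.exists_dist_lt (v i) (by norm_num)
  choose c hcs hcd using hchoice
  have : Countable s := hsc.to_subtype
  have hinj : Function.Injective fun i => (⟨c i, hcs i⟩ : s) := by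
    intro i j h
    by_contra hij
    have hc : c i = c j := congrArg Subtype.val h
    have h1 : dist (v i) (v j) < 1 :=
      calc dist (v i) (v j) ≤ dist (v i) (c i) + dist (c j) (v j) := by
            rw [hc]; exact dist_triangle _ _ _
        _ < 1 / 2 + 1 / 2 := by
            have := hcd j
            rw [dist_comm] at this
            exact add_lt_add (hcd i) this
        _ = 1 := by norm_num
    have h2 : (2 : ℝ) = dist (v i) (v j) ^ 2 := hdist i j hij
    nlinarith [dist_nonneg (x := v i) (y := v j)]
  exact Function.Injective.countable hinj

/-- **Existence of a Gel'fand triple with Hilbert–Schmidt embedding.**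
For every separable real Hilbert space `H` there exist a separable real Hilbert space `E`
and an injective continuous linear map `i : H → E` with dense range which is Hilbert–Schmidt,
i.e. there is a Hilbert basis `(e n)` of `H` indexed by a countable type such that
`∑ n, ‖i (e n)‖ ^ 2 < ∞`. -/
theorem gelfand_triple_hilbert_schmidt
    (H : Type*) [NormedAddCommGroup H] [InnerProductSpace ℝ H]
    [CompleteSpace H] [TopologicalSpace.SeparableSpace H] :
    ∃ (E : Type) (_ : NormedAddCommGroup E) (_ : InnerProductSpace ℝ E),
      CompleteSpace E ∧ TopologicalSpace.SeparableSpace E ∧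
      ∃ i : H →L[ℝ] E, Function.Injective i ∧ DenseRange i ∧
        ∃ (ι : Type) (_ : Countable ι) (e : HilbertBasis ι ℝ H),
          Summable fun n : ι => ‖i (e n)‖ ^ 2 := by
  classical
  -- get a Hilbert basis indexed by a set `w ⊆ H`
  obtain ⟨w, b, hb⟩ := exists_hilbertBasis ℝ H
  have hcount : Countable w := gelfand_aux_countable (hb ▸ b.orthonormal)
  -- reindex by a subtype of ℕ (a `Type 0`)
  obtain ⟨f⟩ := nonempty_embedding_nat w
  set κ : Type := ↥(Set.range (⇑f)) with hκ
  have : Countable κ := Subtype.countable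
  let eq : κ ≃ w := (Equiv.ofInjective (⇑f) f.injective).symm
  have horth : Orthonormal ℝ (⇑b ∘ ⇑eq) := b.orthonormal.comp _ eq.injective
  have hrange : Set.range (⇑b ∘ ⇑eq) = Set.range ⇑b := eq.surjective.range_comp _
  have hsp : ⊤ ≤ (Submodule.span ℝ (Set.range (⇑b ∘ ⇑eq))).topologicalClosure := by
    rw [hrange, b.dense_span]
  let b' : HilbertBasis κ ℝ H := HilbertBasis.mk horth hsp
  -- the weights
  let wt : κ → ℝ := fun n => (2 : ℝ)⁻¹ ^ (n : ℕ)
  have hwt0 : ∀ n, (0 : ℝ) < wt n := fun n => by positivity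
  have hwt1 : ∀ n, |wt n| ≤ 1 := by
    intro n
    rw [abs_of_pos (hwt0 n)]
    exact pow_le_one₀ (by norm_num) (by norm_num)
  -- the target space
  let E : Type := ↥(lp (fun _ : κ => ℝ) 2)
  have h2 : (2 : ℝ≥0∞).toReal = 2 := by norm_num
  have hp2 : 0 < (2 : ℝ≥0∞).toReal := by norm_num
  -- the diagonal operator
  have hmem : ∀ g : E, Memℓp (fun n => wt n * g n) 2 := by
    intro g
    apply memℓp_gen
    refine Summable.of_nonneg_of_le (fun n => ?_) (fun n => ?_) ((lp.memℓp g).summable hp2)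
    · positivity
    · rw [h2, Real.rpow_two, Real.rpow_two]
      have : ‖wt n * g n‖ ≤ ‖g n‖ := by
        rw [norm_mul]
        calc ‖wt n‖ * ‖g n‖ ≤ 1 * ‖g n‖ :=
              mul_le_mul_of_nonneg_right (hwt1 n) (norm_nonneg _)
          _ = ‖g n‖ := one_mul _
      exact pow_le_pow_left₀ (norm_nonneg _) this 2
  let Dlin : E →ₗ[ℝ] E :=
    { toFun := fun g => ⟨fun n => wt n * g n, hmem g⟩
      map_add' := by
        intro g₁ g₂
        ext n
        simp only [lp.coeFn_add, Pi.add_apply]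
        change wt n * (g₁ n + g₂ n) = wt n * g₁ n + wt n * g₂ n
        ring
      map_smul' := by
        intro c g
        ext n
        simp only [lp.coeFn_smul, Pi.smul_apply, smul_eq_mul, RingHom.id_apply]
        change wt n * (c * g n) = c * (wt n * g n)
        ring }
  have hDlin_apply : ∀ (g : E) (n : κ), (Dlin g) n = wt n * g n := fun _ _ => rfl
  have hbound : ∀ g : E, ‖Dlin g‖ ≤ 1 * ‖g‖ := by
    intro g
    rw [one_mul]
    refine lp.norm_le_of_tsum_le hp2 (norm_nonneg g) ?_
    rw [lp.norm_rpow_eq_tsum hp2 g]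
    refine Summable.tsum_le_tsum (fun n => ?_) ((lp.memℓp (Dlin g)).summable hp2)
      ((lp.memℓp g).summable hp2)
    rw [h2, Real.rpow_two, Real.rpow_two, hDlin_apply]
    have : ‖wt n * g n‖ ≤ ‖g n‖ := by
      rw [norm_mul]
      calc ‖wt n‖ * ‖g n‖ ≤ 1 * ‖g n‖ :=
            mul_le_mul_of_nonneg_right (hwt1 n) (norm_nonneg _)
        _ = ‖g n‖ := one_mul _
    exact pow_le_pow_left₀ (norm_nonneg _) this 2
  let D : E →L[ℝ] E := Dlin.mkContinuous 1 hbound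
  have hD_apply : ∀ (g : E) (n : κ), (D g) n = wt n * g n := fun _ _ => rfl
  have hD_single : ∀ (n : κ) (c : ℝ), D (lp.single 2 n c) = lp.single 2 n (wt n * c) := by
    intro n c
    ext m
    rw [hD_apply]
    by_cases hmn : m = n
    · subst hmn; simp [lp.single_apply_self]
    · simp [lp.single_apply_ne 2 n _ hmn, Pi.single_apply, hmn]
  have hD_inj : Function.Injective D := by
    rw [injective_iff_map_eq_zero]
    intro g hg
    ext n
    have := congrArg (fun x : E => x n) hg
    simp only [hD_apply] at this
    have h0 : wt n * g n = 0 := this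
    have := (hwt0 n).ne'
    simp only [lp.coeFn_zero, Pi.zero_apply]
    rcases mul_eq_zero.mp h0 with h | h
    · exact absurd h this
    · exact h
  have hD_dense : DenseRange D := by
    have hclos : (LinearMap.range (D : E →ₗ[ℝ] E)).topologicalClosure = ⊤ := by
      rw [Submodule.topologicalClosure_eq_top_iff]
      rw [Submodule.eq_bot_iff]
      intro g hg
      ext n
      have hmem' : D (lp.single 2 n 1) ∈ LinearMap.range (D : E →ₗ[ℝ] E) :=
        ⟨lp.single 2 n 1, rfl⟩
      have hinner := (Submodule.mem_orthogonal _ g).mp hg _ hmem'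
      rw [hD_single, lp.inner_single_left] at hinner
      simp only [RCLike.inner_apply, conj_trivial, mul_one] at hinner
      have h0 : wt n * g n = 0 := by rw [mul_comm]; exact hinner
      simp only [lp.coeFn_zero, Pi.zero_apply]
      rcases mul_eq_zero.mp h0 with h | h
      · exact absurd h (hwt0 n).ne'
      · exact h
    have hdense : Dense ((LinearMap.range (D : E →ₗ[ℝ] E) : Submodule ℝ E) : Set E) :=
      Submodule.dense_iff_topologicalClosure_eq_top.mpr hclos
    have : (LinearMap.range (D : E →ₗ[ℝ] E) : Set E) = Set.range ⇑D := by
      ext x; simp [LinearMap.mem_range]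
    rwa [this] at hdense
  -- the embedding
  let J : H →L[ℝ] E := b'.repr.toContinuousLinearEquiv.toContinuousLinearMap
  have hJ_apply : ∀ x, J x = b'.repr x := fun _ => rfl
  let i : H →L[ℝ] E := D.comp J
  refine ⟨E, inferInstance, inferInstance, inferInstance, ?_, i, ?_, ?_, κ, inferInstance, b', ?_⟩
  · -- separable
    have hi : DenseRange (⇑D ∘ ⇑b'.repr) :=
      hD_dense.comp b'.repr.surjective.denseRange D.continuous
    exact hi.separableSpace (D.continuous.comp b'.repr.continuous)
  · exact hD_inj.comp (by intro x y hxy; exact b'.repr.injective hxy)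
  · have : ⇑i = ⇑D ∘ ⇑b'.repr := rfl
    rw [show DenseRange ⇑i ↔ DenseRange (⇑D ∘ ⇑b'.repr) from by rw [this]]
    exact hD_dense.comp b'.repr.surjective.denseRange D.continuous
  · have key : ∀ n : κ, i (b' n) = lp.single 2 n (wt n) := by
      intro n
      have : J (b' n) = lp.single 2 n 1 := b'.repr_self n
      show D (J (b' n)) = _
      rw [this, hD_single, mul_one]
    have hnorm : ∀ n : κ, ‖i (b' n)‖ = wt n := by
      intro n
      rw [key n]
      have := lp.norm_single (E := fun _ : κ => ℝ) (by norm_num : (0 : ℝ≥0∞) < 2) n (wt n)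
      rw [this, Real.norm_eq_abs, abs_of_pos (hwt0 n)]
    have : (fun n : κ => ‖i (b' n)‖ ^ 2) = fun n : κ => ((4 : ℝ)⁻¹ ^ (n : ℕ)) := by
      funext n
      rw [hnorm n]
      show ((2 : ℝ)⁻¹ ^ (n : ℕ)) ^ 2 = _
      rw [← pow_mul, mul_comm, pow_mul]
      norm_num
    rw [this]
    have hgeo : Summable fun k : ℕ => (4 : ℝ)⁻¹ ^ k :=
      summable_geometric_of_lt_one (by norm_num) (by norm_num)
    exact hgeo.comp_injective Subtype.coe_injective
end
end

section
/- Let E be a separable real Banach space. The σ-algebra on E generated by the family of ℂ-valued functions x ↦ exp(i·ξ(x)), where ξ ranges over the continuous real-linear functionals on E, coincides with the Borel σ-algebra of E. -/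
open MeasureTheory MeasurableSpace Metric Filter

lemma aux_tendsto (x : ℝ) :
    Tendsto (fun n : ℕ => ((n : ℝ) + 1) * (Complex.exp (Complex.I * ((((n : ℝ) + 1)⁻¹ * x : ℝ) : ℂ))).im)
      atTop (nhds x) := by
  rw [tendsto_iff_dist_tendsto_zero]
  have hg : Tendsto (fun n : ℕ => x ^ 2 / ((n:ℝ) + 1)) atTop (nhds 0) := by
    apply Tendsto.div_atTop (tendsto_const_nhds)
    exact tendsto_atTop_add_const_right _ _ tendsto_natCast_atTop_atTop
  refine squeeze_zero' (Eventually.of_forall fun n => dist_nonneg) ?_ hg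
  filter_upwards [eventually_ge_atTop (Nat.ceil (|x|))] with n hn
  have hn1 : (0:ℝ) < (n : ℝ) + 1 := by positivity
  set t : ℝ := ((n:ℝ)+1)⁻¹ * x with ht
  have hxn : |x| ≤ (n:ℝ) + 1 := by
    calc |x| ≤ (Nat.ceil |x| : ℝ) := Nat.le_ceil _
      _ ≤ (n:ℝ) := by exact_mod_cast hn
      _ ≤ (n:ℝ) + 1 := by linarith
  have hx : |t| ≤ 1 := by
    rw [ht, abs_mul, abs_inv, abs_of_pos hn1, inv_mul_le_iff₀ hn1, mul_one]
    exact hxn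
  have key : ‖(Complex.exp (Complex.I * (t:ℂ)) - 1 - Complex.I * t)‖ ≤ t ^ 2 := by
    have := Complex.norm_exp_sub_one_sub_id_le (x := Complex.I * t) (by
      simpa [Complex.norm_real] using hx)
    simpa [Complex.norm_real, sq_abs] using this
  have him : |(Complex.exp (Complex.I * (t:ℂ))).im - t| ≤ t ^ 2 := by
    have h2 : |(Complex.exp (Complex.I * (t:ℂ)) - 1 - Complex.I * t).im|
        ≤ ‖(Complex.exp (Complex.I * (t:ℂ)) - 1 - Complex.I * t)‖ :=
      Complex.abs_im_le_norm _
    simpa [Complex.sub_im, Complex.mul_im, Complex.I_re, Complex.I_im,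
      Complex.ofReal_re, Complex.ofReal_im] using h2.trans key
  have hat : ((n:ℝ)+1) * t = x := by rw [ht]; field_simp
  have hdist : dist (((n:ℝ)+1) * (Complex.exp (Complex.I * (t:ℂ))).im) x
      = ((n:ℝ)+1) * |(Complex.exp (Complex.I * (t:ℂ))).im - t| := by
    rw [Real.dist_eq, ← hat, ← mul_sub, abs_mul, abs_of_pos hn1]
  calc dist (((n:ℝ)+1) * (Complex.exp (Complex.I * (t:ℂ))).im) x
      = ((n:ℝ)+1) * |(Complex.exp (Complex.I * (t:ℂ))).im - t| := hdist
    _ ≤ ((n:ℝ)+1) * t ^ 2 := mul_le_mul_of_nonneg_left him hn1.le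
    _ = x ^ 2 / ((n:ℝ)+1) := by rw [ht]; field_simp

lemma aux_functional_measurable {E : Type*} [NormedAddCommGroup E] [NormedSpace ℝ E]
    (M : MeasurableSpace E)
    (h : ∀ ξ : E →L[ℝ] ℝ, Measurable[M] (fun x : E => Complex.exp (Complex.I * (ξ x : ℂ))))
    (ξ : E →L[ℝ] ℝ) : Measurable[M] fun x : E => ξ x := by
  letI := M
  apply measurable_of_tendsto_metrizable
    (f := fun (n : ℕ) (x : E) =>
      ((n : ℝ) + 1) * (Complex.exp (Complex.I * ((((n : ℝ) + 1)⁻¹ * ξ x : ℝ) : ℂ))).im)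
  · intro n
    have hc : (fun x : E => Complex.exp (Complex.I * (((((n : ℝ) + 1)⁻¹ • ξ) x : ℝ) : ℂ)))
        = fun x : E => Complex.exp (Complex.I * ((((n : ℝ) + 1)⁻¹ * ξ x : ℝ) : ℂ)) := by
      ext x; simp [ContinuousLinearMap.smul_apply, smul_eq_mul]
    have := (h (((n : ℝ) + 1)⁻¹ • ξ))
    rw [hc] at this
    exact (Complex.measurable_im.comp this).const_mul _
  · exact tendsto_pi_nhds.2 fun x => aux_tendsto (ξ x)

lemma aux_norming {E : Type*} [NormedAddCommGroup E] [NormedSpace ℝ E]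
    [TopologicalSpace.SeparableSpace E] :
    ∃ (u : ℕ → E) (ξ : ℕ → E →L[ℝ] ℝ), DenseRange u ∧
      ∀ (x : E) (r : ℝ), ‖x‖ ≤ r ↔ ∀ n, ξ n x ≤ r := by
  have : Nonempty E := ⟨0⟩
  obtain ⟨u, hu⟩ := TopologicalSpace.exists_dense_seq E
  have hξ : ∀ n : ℕ, ∃ g : E →L[ℝ] ℝ, ‖g‖ ≤ 1 ∧ g (u n) = ‖u n‖ := fun n =>
    exists_dual_vector'' ℝ (u n)
  choose ξ hξ1 hξ2 using hξ
  refine ⟨u, ξ, hu, fun x r => ⟨fun h n => ?_, fun h => ?_⟩⟩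
  · calc ξ n x ≤ |ξ n x| := le_abs_self _
      _ ≤ ‖ξ n‖ * ‖x‖ := (ξ n).le_opNorm x
      _ ≤ 1 * ‖x‖ := mul_le_mul_of_nonneg_right (hξ1 n) (norm_nonneg x)
      _ = ‖x‖ := one_mul _
      _ ≤ r := h
  · refine le_of_forall_pos_le_add fun ε hε => ?_
    obtain ⟨n, hn⟩ := hu.exists_dist_lt x (half_pos hε)
    rw [dist_comm, dist_eq_norm] at hn
    have h1 : |ξ n (x - u n)| ≤ ‖x - u n‖ := by
      calc |ξ n (x - u n)| ≤ ‖ξ n‖ * ‖x - u n‖ := (ξ n).le_opNorm _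
        _ ≤ 1 * ‖x - u n‖ := mul_le_mul_of_nonneg_right (hξ1 n) (norm_nonneg _)
        _ = ‖x - u n‖ := one_mul _
    have h2 : ‖u n‖ ≥ ‖x‖ - ‖x - u n‖ := by
      have := norm_sub_norm_le x (u n)
      linarith [this]
    have h3 : ξ n x = ξ n (u n) + ξ n (x - u n) := by
      rw [← map_add]; congr 1; abel
    have h4 : ξ n x ≥ ‖x‖ - 2 * ‖x - u n‖ := by
      rw [h3, hξ2 n]
      have := neg_abs_le (ξ n (x - u n))
      linarith
    have h5 := h n
    have h6 : ‖x - u n‖ = ‖u n - x‖ := norm_sub_rev _ _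
    linarith

/-- **The characters generate the Borel σ-algebra.**
Let `E` be a separable real Banach space. The σ-algebra on `E` generated by the family of
functions `x ↦ exp(i ξ x)`, `ξ` ranging over the continuous real-linear functionals on `E`,
coincides with the Borel σ-algebra of `E`. -/
theorem sigmaAlgebra_generated_by_characters_eq_borel
    (E : Type*) [NormedAddCommGroup E] [NormedSpace ℝ E] [CompleteSpace E]
    [TopologicalSpace.SeparableSpace E]
    [MeasurableSpace E] [BorelSpace E] :
    (⨆ ξ : E →L[ℝ] ℝ,
      MeasurableSpace.comap (fun x : E => Complex.exp (Complex.I * (ξ x : ℂ)))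
        (inferInstance : MeasurableSpace ℂ)) = (inferInstance : MeasurableSpace E) := by
  apply le_antisymm
  · refine iSup_le fun ζ => Measurable.comap_le ?_
    exact (Complex.continuous_exp.comp
      (continuous_const.mul (Complex.continuous_ofReal.comp ζ.continuous))).measurable
  · have hchar : ∀ ζ : E →L[ℝ] ℝ,
        Measurable[⨆ ξ : E →L[ℝ] ℝ,
          MeasurableSpace.comap (fun x : E => Complex.exp (Complex.I * (ξ x : ℂ)))
            (inferInstance : MeasurableSpace ℂ)]
          (fun x : E => Complex.exp (Complex.I * (ζ x : ℂ))) := fun ζ =>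
      Measurable.of_comap_le
        (le_iSup (fun ξ : E →L[ℝ] ℝ =>
          MeasurableSpace.comap (fun x : E => Complex.exp (Complex.I * (ξ x : ℂ)))
            (inferInstance : MeasurableSpace ℂ)) ζ)
    have hfun : ∀ ζ : E →L[ℝ] ℝ,
        Measurable[⨆ ξ : E →L[ℝ] ℝ,
          MeasurableSpace.comap (fun x : E => Complex.exp (Complex.I * (ξ x : ℂ)))
            (inferInstance : MeasurableSpace ℂ)] fun x : E => ζ x :=
      aux_functional_measurable _ hchar
    obtain ⟨u, ξ, hu, hnorm⟩ := aux_norming (E := E)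
    have hball : ∀ (a : E) (r : ℝ),
        MeasurableSet[⨆ ξ : E →L[ℝ] ℝ,
          MeasurableSpace.comap (fun x : E => Complex.exp (Complex.I * (ξ x : ℂ)))
            (inferInstance : MeasurableSpace ℂ)] (Metric.closedBall a r) := by
      intro a r
      have heq : Metric.closedBall a r
          = ⋂ n, (fun x : E => ξ n x) ⁻¹' Set.Iic (r + ξ n a) := by
        ext x
        simp only [Metric.mem_closedBall, dist_eq_norm, Set.mem_iInter, Set.mem_preimage,
          Set.mem_Iic]
        rw [hnorm (x - a) r]
        constructor
        · intro h n
          have := h n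
          rw [map_sub] at this
          linarith
        · intro h n
          rw [map_sub]
          have := h n
          linarith
      rw [heq]
      exact MeasurableSet.iInter fun n => (hfun (ξ n)) measurableSet_Iic
    rw [BorelSpace.measurable_eq (α := E)]
    refine MeasurableSpace.generateFrom_le fun s hs => ?_
    have hs' : IsOpen s := hs
    have hrep : s = ⋃ p : ℕ × ℚ, ⋃ (_ : 0 < (p.2 : ℝ) ∧ Metric.closedBall (u p.1) (p.2 : ℝ) ⊆ s),
        Metric.closedBall (u p.1) (p.2 : ℝ) := by
      ext x
      simp only [Set.mem_iUnion]
      constructor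
      · intro hx
        obtain ⟨ε, hε, hballs⟩ := Metric.isOpen_iff.1 hs' x hx
        obtain ⟨q, hq0, hq2⟩ := exists_rat_btwn (half_pos hε)
        have hq0' : (0 : ℝ) < q := hq0
        obtain ⟨n, hn⟩ := hu.exists_dist_lt x hq0'
        refine ⟨(n, q), ⟨hq0', fun y hy => hballs ?_⟩, ?_⟩
        · rw [Metric.mem_ball]
          calc dist y x ≤ dist y (u n) + dist (u n) x := dist_triangle _ _ _
            _ < (q : ℝ) + (q : ℝ) := by
                rw [dist_comm (u n) x]
                exact add_lt_add_of_le_of_lt (Metric.mem_closedBall.1 hy) hn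
            _ < ε := by linarith
        · rw [Metric.mem_closedBall]
          exact hn.le
      · rintro ⟨p, ⟨-, hsub⟩, hx⟩
        exact hsub hx
    rw [hrep]
    exact MeasurableSet.iUnion fun p => MeasurableSet.iUnion fun _ => hball _ _
end

section
/- Let 𝓗 be a nontrivial real Hilbert space, H ∈ (0,1), (Ω, ℱ, ℙ) a probability space, and X : 𝓗 → Ω → ℝ a stochastic process such that X(f) is square-integrable for every f ∈ 𝓗. Assume: (SS1) for every a > 0, every n ∈ ℕ and every f : Fin n → 𝓗, the law on ℝⁿ of ω ↦ (a^{−H}·X(a·f_i)(ω))_{i} equals the law of ω ↦ (X(f_i)(ω))_i; and (SI1) for every map ψ : 𝓗 → 𝓗 of the form ψ(f) = U(f) + h with U a linear isometric equivalence of 𝓗 and h ∈ 𝓗, and every n and f : Fin n → 𝓗, the law on ℝⁿ of ω ↦ (X(ψ(f_i))(ω) − X(ψ(0))(ω))_i equals the law of ω ↦ (X(f_i)(ω) − X(0)(ω))_i. Then E[X(f)] = 0 for every f ∈ 𝓗, and there exists σ² ≥ 0 (namely σ² = E[X(f₀)²] for any unit vector f₀, independent of the choice of f₀) such that for all f, g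 ∈ 𝓗: E[X(f)·X(g)] = σ² · ½(‖f‖^{2H} + ‖g‖^{2H} − ‖f − g‖^{2H}). -/
open MeasureTheory

/-- Transfer of integrals of one-dimensional functionals along an equality of laws on `Fin 1 → ℝ`. -/
lemma transfer1 {Ω : Type*} [MeasurableSpace Ω] (ℙ : Measure Ω) (Y Z : Ω → ℝ)
    (hY : AEMeasurable Y ℙ) (hZ : AEMeasurable Z ℙ)
    (h : Measure.map (fun ω => fun _ : Fin 1 => Y ω) ℙ =
      Measure.map (fun ω => fun _ : Fin 1 => Z ω) ℙ)
    (g : ℝ → ℝ) (hg : Measurable g) :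
    ∫ ω, g (Y ω) ∂ℙ = ∫ ω, g (Z ω) ∂ℙ := by
  have hmk : Measurable (fun y : ℝ => fun _ : Fin 1 => y) :=
    measurable_pi_lambda _ fun _ => measurable_id
  have hY' : AEMeasurable (fun ω => fun _ : Fin 1 => Y ω) ℙ := hmk.comp_aemeasurable hY
  have hZ' : AEMeasurable (fun ω => fun _ : Fin 1 => Z ω) ℙ := hmk.comp_aemeasurable hZ
  have hG : Measurable fun v : Fin 1 → ℝ => g (v 0) := hg.comp (measurable_pi_apply 0)
  calc ∫ ω, g (Y ω) ∂ℙ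
      = ∫ v, g (v 0) ∂(Measure.map (fun ω => fun _ : Fin 1 => Y ω) ℙ) :=
        (integral_map hY' hG.aestronglyMeasurable).symm
    _ = ∫ v, g (v 0) ∂(Measure.map (fun ω => fun _ : Fin 1 => Z ω) ℙ) := by rw [h]
    _ = ∫ ω, g (Z ω) ∂ℙ := integral_map hZ' hG.aestronglyMeasurable

/-- **Characterization of the `L²`-indexed fractional Brownian motion, first version.**
A Gaussian-free statement of Proposition 3.2: if a square-integrable process `X` indexed by a
nontrivial real Hilbert space `𝓗` is `H`-self-similar (SS1) and strongly `L²`-increment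
stationary (SI1), then it is centered and its covariance is
`σ² ½(‖f‖^{2H} + ‖g‖^{2H} − ‖f − g‖^{2H})` where `σ² = E[X f₀ ²]` for any unit vector `f₀`. -/
theorem L2fBm_characterization_strong
    (𝓗 : Type*) [NormedAddCommGroup 𝓗] [InnerProductSpace ℝ 𝓗] [CompleteSpace 𝓗]
    [Nontrivial 𝓗]
    (H : ℝ) (hH : H ∈ Set.Ioo (0 : ℝ) 1)
    (Ω : Type*) [MeasurableSpace Ω] (ℙ : Measure Ω) [IsProbabilityMeasure ℙ]
    (X : 𝓗 → Ω → ℝ)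
    (hX : ∀ f : 𝓗, MemLp (X f) 2 ℙ)
    (hSS1 : ∀ a : ℝ, 0 < a → ∀ (n : ℕ) (f : Fin n → 𝓗),
      Measure.map (fun ω => fun i => a ^ (-H) * X (a • f i) ω) ℙ =
        Measure.map (fun ω => fun i => X (f i) ω) ℙ)
    (hSI1 : ∀ (U : 𝓗 ≃ₗᵢ[ℝ] 𝓗) (h : 𝓗) (n : ℕ) (f : Fin n → 𝓗),
      Measure.map (fun ω => fun i => X (U (f i) + h) ω - X (U 0 + h) ω) ℙ =
        Measure.map (fun ω => fun i => X (f i) ω - X 0 ω) ℙ) :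
    (∀ f : 𝓗, ∫ ω, X f ω ∂ℙ = 0) ∧
    ∃ σ2 : ℝ, 0 ≤ σ2 ∧
      (∀ f₀ : 𝓗, ‖f₀‖ = 1 → ∫ ω, X f₀ ω ^ 2 ∂ℙ = σ2) ∧
      (∀ f g : 𝓗, ∫ ω, X f ω * X g ω ∂ℙ =
        σ2 * ((‖f‖ ^ (2 * H) + ‖g‖ ^ (2 * H) - ‖f - g‖ ^ (2 * H)) / 2)) := by
  obtain ⟨hH0, hH1⟩ := hH
  have hMeas : ∀ f : 𝓗, AEMeasurable (X f) ℙ := fun f =>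
    (hX f).aestronglyMeasurable.aemeasurable
  have hInt : ∀ f : 𝓗, Integrable (X f) ℙ :=
    fun f => (hX f).integrable (by norm_num)
  have hIntSq : ∀ f : 𝓗, Integrable (fun ω => X f ω ^ 2) ℙ :=
    fun f => (hX f).integrable_sq
  have hIntMul : ∀ f g : 𝓗, Integrable (fun ω => X f ω * X g ω) ℙ := by
    intro f g
    have h1 : Integrable (fun ω => ((X f ω + X g ω) ^ 2 - X f ω ^ 2 - X g ω ^ 2) / 2) ℙ :=
      ((((hX f).add (hX g)).integrable_sq.sub (hIntSq f)).sub (hIntSq g)).div_const 2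
    convert h1 using 2 with ω
    ring
  -- Step 1: X 0 = 0 a.e.
  have hX0sq : ∫ ω, X 0 ω ^ 2 ∂ℙ = 0 := by
    have h := hSS1 2 (by norm_num) 1 (fun _ => (0 : 𝓗))
    simp only [smul_zero] at h
    have ht := transfer1 ℙ (fun ω => (2:ℝ) ^ (-H) * X 0 ω) (X 0)
      (((hMeas 0).const_mul _)) (hMeas 0) h (fun x => x ^ 2) (measurable_id.pow_const 2)
    simp only [mul_pow] at ht
    rw [integral_const_mul] at ht
    have hc : ((2:ℝ) ^ (-H)) ^ 2 < 1 := by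
      have h1 : (2:ℝ) ^ (-H) < 1 :=
        Real.rpow_lt_one_of_one_lt_of_neg (by norm_num) (by linarith)
      have h0 : (0:ℝ) ≤ (2:ℝ) ^ (-H) := (Real.rpow_pos_of_pos (by norm_num) _).le
      nlinarith
    have hkey : (((2:ℝ) ^ (-H)) ^ 2 - 1) * ∫ ω, X 0 ω ^ 2 ∂ℙ = 0 := by
      rw [sub_mul, one_mul, ht]; ring
    rcases mul_eq_zero.mp hkey with h' | h'
    · linarith
    · exact h'
  have hX0 : X 0 =ᵐ[ℙ] 0 := by
    have h := (integral_eq_zero_iff_of_nonneg (fun ω => sq_nonneg (X 0 ω)) (hIntSq 0)).mp hX0sq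
    filter_upwards [h] with ω hω
    have : X 0 ω ^ 2 = 0 := hω
    simpa using pow_eq_zero_iff (n := 2) (by norm_num) |>.mp this
  -- integral of squared increments from SI1
  have hsub : ∀ f g : 𝓗, AEMeasurable (fun ω => X f ω - X g ω) ℙ :=
    fun f g => (hMeas f).sub (hMeas g)
  have hSI : ∀ (U : 𝓗 ≃ₗᵢ[ℝ] 𝓗) (h f : 𝓗) (g : ℝ → ℝ), Measurable g →
      ∫ ω, g (X (U f + h) ω - X (U 0 + h) ω) ∂ℙ = ∫ ω, g (X f ω - X 0 ω) ∂ℙ := by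
    intro U h f g hg
    exact transfer1 ℙ _ _ (hsub _ _) (hsub _ _) (hSI1 U h 1 (fun _ => f)) g hg
  -- drop X 0 a.e.
  have hdrop : ∀ f : 𝓗, ∀ g : ℝ → ℝ, ∫ ω, g (X f ω - X 0 ω) ∂ℙ = ∫ ω, g (X f ω) ∂ℙ := by
    intro f g
    apply integral_congr_ae
    filter_upwards [hX0] with ω hω
    rw [hω]; simp
  -- Step 2: mean zero
  have hmean : ∀ f : 𝓗, ∫ ω, X f ω ∂ℙ = 0 := by
    intro f
    have hIX0 : ∫ ω, X 0 ω ∂ℙ = 0 := by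
      rw [integral_congr_ae hX0]; simp
    have h1 := hSI (LinearIsometryEquiv.neg ℝ (E := 𝓗)) 0 f id measurable_id
    simp only [LinearIsometryEquiv.coe_neg, neg_zero, add_zero, id] at h1
    rw [integral_sub (hInt _) (hInt _), integral_sub (hInt _) (hInt _), hIX0] at h1
    have h2 := hSI (LinearIsometryEquiv.refl ℝ 𝓗) (-f) f id measurable_id
    simp only [LinearIsometryEquiv.coe_refl, id, add_neg_cancel, zero_add] at h2
    rw [integral_sub (hInt _) (hInt _), integral_sub (hInt _) (hInt _), hIX0] at h2
    -- h1 : ∫ X(-f) - ∫ X(-0... )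
    linarith [h1, h2]
  -- Step 3: squared increments
  have hincr : ∀ f g : 𝓗, ∫ ω, (X f ω - X g ω) ^ 2 ∂ℙ = ∫ ω, X (f - g) ω ^ 2 ∂ℙ := by
    intro f g
    have h := hSI (LinearIsometryEquiv.refl ℝ 𝓗) g (f - g) (fun x => x ^ 2)
      (measurable_id.pow_const 2)
    simp only [LinearIsometryEquiv.coe_refl, id, sub_add_cancel, zero_add] at h
    rw [hdrop (f - g) (fun x => x ^ 2)] at h
    exact h
  -- Step 4: rotation invariance of variance
  have hrot : ∀ (U : 𝓗 ≃ₗᵢ[ℝ] 𝓗) (f : 𝓗), ∫ ω, X (U f) ω ^ 2 ∂ℙ = ∫ ω, X f ω ^ 2 ∂ℙ := by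
    intro U f
    have h := hSI U 0 f (fun x => x ^ 2) (measurable_id.pow_const 2)
    simp only [add_zero, map_zero] at h
    rw [hdrop (U f) (fun x => x ^ 2), hdrop f (fun x => x ^ 2)] at h
    exact h
  -- choose a unit vector
  obtain ⟨v, hv⟩ := exists_ne (0 : 𝓗)
  have hvn : ‖v‖ ≠ 0 := norm_ne_zero_iff.mpr hv
  set e₀ : 𝓗 := ‖v‖⁻¹ • v with he₀
  have he₀n : ‖e₀‖ = 1 := by
    rw [he₀, norm_smul, norm_inv, norm_norm, inv_mul_cancel₀ hvn]
  set σ2 : ℝ := ∫ ω, X e₀ ω ^ 2 ∂ℙ with hσ2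
  have hσ2nonneg : 0 ≤ σ2 := integral_nonneg fun ω => sq_nonneg _
  -- all unit vectors have the same variance
  have hunit : ∀ f₀ : 𝓗, ‖f₀‖ = 1 → ∫ ω, X f₀ ω ^ 2 ∂ℙ = σ2 := by
    intro f₀ hf₀
    have hne : ‖e₀‖ = ‖f₀‖ := by rw [he₀n, hf₀]
    have hU : Submodule.reflection (ℝ ∙ (e₀ - f₀))ᗮ e₀ = f₀ := Submodule.reflection_sub hne
    have := hrot (Submodule.reflection (ℝ ∙ (e₀ - f₀))ᗮ) e₀
    rw [hU] at this
    exact this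
  -- variance for general vectors
  have hvar : ∀ f : 𝓗, ∫ ω, X f ω ^ 2 ∂ℙ = σ2 * ‖f‖ ^ (2 * H) := by
    intro f
    rcases eq_or_ne f 0 with rfl | hf
    · rw [integral_congr_ae (by filter_upwards [hX0] with ω hω; rw [hω]; simp :
        (fun ω => X 0 ω ^ 2) =ᵐ[ℙ] 0)]
      simp [Real.zero_rpow (by positivity : 2 * H ≠ 0)]
    · have ha : (0:ℝ) < ‖f‖ := norm_pos_iff.mpr hf
      set e : 𝓗 := ‖f‖⁻¹ • f with he
      have hen : ‖e‖ = 1 := by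
        rw [he, norm_smul, norm_inv, norm_norm, inv_mul_cancel₀ ha.ne']
      have hfe : ‖f‖ • e = f := by
        rw [he, smul_inv_smul₀ ha.ne']
      have h := hSS1 ‖f‖ ha 1 (fun _ => e)
      have ht := transfer1 ℙ (fun ω => ‖f‖ ^ (-H) * X (‖f‖ • e) ω) (X e)
        ((hMeas _).const_mul _) (hMeas e) h (fun x => x ^ 2) (measurable_id.pow_const 2)
      simp only [mul_pow, hfe] at ht
      rw [integral_const_mul, hunit e hen] at ht
      have hpow : (‖f‖ ^ (-H)) ^ 2 = (‖f‖ ^ (2 * H))⁻¹ := by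
        rw [← Real.rpow_natCast (‖f‖ ^ (-H)) 2, ← Real.rpow_mul ha.le, ← Real.rpow_neg ha.le]
        norm_num
        ring_nf
      rw [hpow] at ht
      have hp : (0:ℝ) < ‖f‖ ^ (2 * H) := Real.rpow_pos_of_pos ha _
      field_simp at ht ⊢
      linarith [ht]
  refine ⟨hmean, σ2, hσ2nonneg, hunit, ?_⟩
  intro f g
  have hIsq : Integrable (fun ω => (X f ω - X g ω) ^ 2) ℙ := ((hX f).sub (hX g)).integrable_sq
  have hIadd : Integrable (fun ω => X f ω ^ 2 + X g ω ^ 2) ℙ := (hIntSq f).add (hIntSq g)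
  have hexp : ∫ ω, X f ω * X g ω ∂ℙ =
      (∫ ω, X f ω ^ 2 ∂ℙ + ∫ ω, X g ω ^ 2 ∂ℙ - ∫ ω, (X f ω - X g ω) ^ 2 ∂ℙ) / 2 := by
    calc ∫ ω, X f ω * X g ω ∂ℙ
        = ∫ ω, (X f ω ^ 2 + X g ω ^ 2 - (X f ω - X g ω) ^ 2) / 2 ∂ℙ := by
          apply integral_congr_ae
          filter_upwards with ω
          ring
      _ = (∫ ω, (X f ω ^ 2 + X g ω ^ 2 - (X f ω - X g ω) ^ 2) ∂ℙ) / 2 :=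
          integral_div 2 _
      _ = (∫ ω, X f ω ^ 2 ∂ℙ + ∫ ω, X g ω ^ 2 ∂ℙ - ∫ ω, (X f ω - X g ω) ^ 2 ∂ℙ) / 2 := by
          rw [integral_sub hIadd hIsq, integral_add (hIntSq f) (hIntSq g)]
  rw [hexp, hincr f g, hvar (f - g), hvar f, hvar g]
  ring
end

section
/- Let 𝓗 be a nontrivial real Hilbert space, H ∈ (0,1), (Ω, ℱ, ℙ) a probability space, and X : 𝓗 → Ω → ℝ a stochastic process such that X(f) is square-integrable for every f. Let 𝒢 be the set of continuous linear bijections φ : 𝓗 → 𝓗 such that ‖f‖ = ‖g‖ implies ‖φ(f)‖ = ‖φ(g)‖, and set ρ(φ) = ‖φ‖_op². Assume: (SS2) for every φ ∈ 𝒢, every n and every f : Fin n → 𝓗, the law on ℝⁿ of ω ↦ (X(φ(f_i))(ω))_i equals the law of ω ↦ (ρ(φ)^H · X(f_i)(ω))_i; and (SI2) for every h ∈ 𝓗, every n and all f, g : Fin n → 𝓗, the law on ℝⁿ of ω ↦ (X(f_i + h)(ω) − X(g_i + h)(ω))_i equals the law of ω ↦ (X(f_i)(ω) − X(g_i)(ω))_i.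 Then E[X(f)] = 0 for every f ∈ 𝓗, and there exists σ² ≥ 0 (namely σ² = E[X(f₀)²] for any unit vector f₀, independent of the choice) such that for all f, g ∈ 𝓗: E[X(f)·X(g)] = σ² · ½(‖f‖^{4H} + ‖g‖^{4H} − ‖f − g‖^{4H}). -/
open MeasureTheory

private lemma moments_of_map_eq {Ω : Type*} [MeasurableSpace Ω] {ℙ : Measure Ω}
    [IsProbabilityMeasure ℙ] {u v : Ω → ℝ} (hu : AEMeasurable u ℙ) (hv : AEMeasurable v ℙ)
    (h : Measure.map (fun ω => fun _ : Fin 1 => u ω) ℙ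
       = Measure.map (fun ω => fun _ : Fin 1 => v ω) ℙ) :
    ∫ ω, u ω ∂ℙ = ∫ ω, v ω ∂ℙ ∧ ∫ ω, u ω ^ 2 ∂ℙ = ∫ ω, v ω ^ 2 ∂ℙ := by
  have hc : Measurable (fun x : ℝ => fun _ : Fin 1 => x) :=
    measurable_pi_lambda _ fun _ => measurable_id
  have hFu : AEMeasurable (fun ω => fun _ : Fin 1 => u ω) ℙ := hc.comp_aemeasurable hu
  have hFv : AEMeasurable (fun ω => fun _ : Fin 1 => v ω) ℙ := hc.comp_aemeasurable hv
  have key : ∀ g : (Fin 1 → ℝ) → ℝ, Measurable g →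
      ∫ ω, g (fun _ => u ω) ∂ℙ = ∫ ω, g (fun _ => v ω) ∂ℙ := by
    intro g hg
    rw [← integral_map hFu hg.aestronglyMeasurable, h,
      integral_map hFv hg.aestronglyMeasurable]
  constructor
  · exact key (fun x => x 0) (measurable_pi_apply 0)
  · exact key (fun x => x 0 ^ 2) ((measurable_pi_apply 0).pow_const 2)

/-- **Characterization of the `L²`-indexed fractional Brownian motion, second version.**
If a square-integrable process `X` indexed by a nontrivial real Hilbert space `𝓗` is strongly
`H`-self-similar (SS2) with respect to the group `𝒢` of continuous linear bijections
preserving equality of norms (with `ρ(φ) = ‖φ‖²`), and weakly `L²`-increment stationary (SI2),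
then `X` is centered and its covariance is `σ² ½(‖f‖^{4H} + ‖g‖^{4H} − ‖f − g‖^{4H})` where
`σ² = E[X f₀ ²]` for any unit vector `f₀`. -/
theorem L2fBm_characterization_weak
    (𝓗 : Type*) [NormedAddCommGroup 𝓗] [InnerProductSpace ℝ 𝓗] [CompleteSpace 𝓗]
    [Nontrivial 𝓗]
    (H : ℝ) (hH : H ∈ Set.Ioo (0 : ℝ) 1)
    (Ω : Type*) [MeasurableSpace Ω] (ℙ : Measure Ω) [IsProbabilityMeasure ℙ]
    (X : 𝓗 → Ω → ℝ)
    (hX : ∀ f : 𝓗, MemLp (X f) 2 ℙ)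
    (hSS2 : ∀ φ : 𝓗 →L[ℝ] 𝓗, Function.Bijective φ →
      (∀ f g : 𝓗, ‖f‖ = ‖g‖ → ‖φ f‖ = ‖φ g‖) →
      ∀ (n : ℕ) (f : Fin n → 𝓗),
        Measure.map (fun ω => fun i => X (φ (f i)) ω) ℙ =
          Measure.map (fun ω => fun i => (‖φ‖ ^ 2) ^ H * X (f i) ω) ℙ)
    (hSI2 : ∀ (h : 𝓗) (n : ℕ) (f g : Fin n → 𝓗),
      Measure.map (fun ω => fun i => X (f i + h) ω - X (g i + h) ω) ℙ =
        Measure.map (fun ω => fun i => X (f i) ω - X (g i) ω) ℙ) :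
    (∀ f : 𝓗, ∫ ω, X f ω ∂ℙ = 0) ∧
    ∃ σ2 : ℝ, 0 ≤ σ2 ∧
      (∀ f₀ : 𝓗, ‖f₀‖ = 1 → ∫ ω, X f₀ ω ^ 2 ∂ℙ = σ2) ∧
      (∀ f g : 𝓗, ∫ ω, X f ω * X g ω ∂ℙ =
        σ2 * ((‖f‖ ^ (4 * H) + ‖g‖ ^ (4 * H) - ‖f - g‖ ^ (4 * H)) / 2)) := by
  obtain ⟨hH0, hH1⟩ := hH
  have hXm : ∀ f : 𝓗, AEMeasurable (X f) ℙ := fun f => (hX f).aestronglyMeasurable.aemeasurable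
  have hXi : ∀ f : 𝓗, Integrable (X f) ℙ := fun f => (hX f).integrable one_le_two
  have hXsq : ∀ f : 𝓗, Integrable (fun ω => X f ω ^ 2) ℙ := fun f => (hX f).integrable_sq
  have hmul : ∀ f g : 𝓗, Integrable (fun ω => X f ω * X g ω) ℙ := by
    intro f g
    have h1 : MemLp ((X f) • (X g)) 1 ℙ := (hX g).smul (hX f)
      (hpqr := ⟨by rw [ENNReal.inv_two_add_inv_two, inv_one]⟩)
    have := memLp_one_iff_integrable.mp h1
    exact this
  set m : 𝓗 → ℝ := fun f => ∫ ω, X f ω ∂ℙ with hm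
  set v : 𝓗 → ℝ := fun f => ∫ ω, X f ω ^ 2 ∂ℙ with hv
  -- scaling
  have hscale : ∀ (r : ℝ), r ≠ 0 → ∀ f : 𝓗,
      m (r • f) = (r ^ 2) ^ H * m f ∧ v (r • f) = ((r ^ 2) ^ H) ^ 2 * v f := by
    intro r hr f
    set φ : 𝓗 →L[ℝ] 𝓗 := r • ContinuousLinearMap.id ℝ 𝓗 with hφ
    have hφa : ∀ x : 𝓗, φ x = r • x := fun x => rfl
    have hbij : Function.Bijective φ := by
      constructor
      · intro x y hxy
        exact smul_right_injective 𝓗 hr (by simpa [hφa] using hxy)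
      · intro y
        exact ⟨r⁻¹ • y, by simp [hφa, smul_smul, mul_inv_cancel₀ hr]⟩
    have hpres : ∀ x y : 𝓗, ‖x‖ = ‖y‖ → ‖φ x‖ = ‖φ y‖ := by
      intro x y hxy; simp [hφa, norm_smul, hxy]
    have hnφ : ‖φ‖ = |r| := by
      have := norm_smul r (ContinuousLinearMap.id ℝ 𝓗)
      rw [hφ, this, ContinuousLinearMap.norm_id, mul_one, Real.norm_eq_abs]
    have hmap := hSS2 φ hbij hpres 1 (fun _ => f)
    rw [hnφ, sq_abs] at hmap
    have hmap' : Measure.map (fun ω => fun _ : Fin 1 => X (r • f) ω) ℙ =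
        Measure.map (fun ω => fun _ : Fin 1 => (r ^ 2) ^ H * X f ω) ℙ := by
      simpa [hφa] using hmap
    obtain ⟨h1, h2⟩ := moments_of_map_eq (hXm _) ((hXm f).const_mul _) hmap'
    constructor
    · exact h1.trans (integral_const_mul _ _)
    · refine h2.trans ?_
      simp_rw [mul_pow]
      exact integral_const_mul _ _
  -- equal norms give equal moments
  have hnormeq : ∀ f g : 𝓗, ‖f‖ = ‖g‖ → m f = m g ∧ v f = v g := by
    intro f g hfg
    set e : 𝓗 ≃ₗᵢ[ℝ] 𝓗 := Submodule.reflection (ℝ ∙ (f - g))ᗮ with he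
    set φ : 𝓗 →L[ℝ] 𝓗 := e.toLinearIsometry.toContinuousLinearMap with hφ
    have hφa : ∀ x : 𝓗, φ x = e x := fun x => rfl
    have hbij : Function.Bijective φ := by
      have hco : (φ : 𝓗 → 𝓗) = e := funext hφa
      rw [hco]; exact e.bijective
    have hpres : ∀ x y : 𝓗, ‖x‖ = ‖y‖ → ‖φ x‖ = ‖φ y‖ := by
      intro x y hxy; simp [hφa, hxy]
    have hnφ : ‖φ‖ = 1 := e.toLinearIsometry.norm_toContinuousLinearMap
    have hmap := hSS2 φ hbij hpres 1 (fun _ => f)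
    have hef : φ f = g := by rw [hφa]; exact Submodule.reflection_sub hfg
    rw [hnφ] at hmap
    simp only [hef, one_pow, Real.one_rpow, one_mul] at hmap
    obtain ⟨h1, h2⟩ := moments_of_map_eq (hXm g) (hXm f) hmap
    exact ⟨h1.symm, h2.symm⟩
  have h4H : (1 : ℝ) < ((2:ℝ) ^ 2) ^ H :=
    (Real.one_lt_rpow_iff_of_pos (by norm_num)).mpr (Or.inl ⟨by norm_num, hH0⟩)
  -- zero at zero
  have hm0 : m 0 = 0 := by
    have h1 := (hscale 2 two_ne_zero 0).1
    rw [smul_zero] at h1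
    have h5 : (((2:ℝ) ^ 2) ^ H - 1) * m 0 = 0 := by linear_combination -h1
    rcases mul_eq_zero.mp h5 with h | h
    · linarith
    · exact h
  have hv0 : v 0 = 0 := by
    have h1 := (hscale 2 two_ne_zero 0).2
    rw [smul_zero] at h1
    have hgt : (1 : ℝ) < (((2:ℝ) ^ 2) ^ H) ^ 2 := one_lt_pow₀ h4H two_ne_zero
    have h5 : ((((2:ℝ) ^ 2) ^ H) ^ 2 - 1) * v 0 = 0 := by linear_combination -h1
    rcases mul_eq_zero.mp h5 with h | h
    · linarith
    · exact h
  have hX0 : X 0 =ᵐ[ℙ] 0 := by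
    have hnn : 0 ≤ᵐ[ℙ] fun ω => X 0 ω ^ 2 := Filter.Eventually.of_forall fun ω => sq_nonneg _
    have h0 := (integral_eq_zero_iff_of_nonneg_ae hnn (hXsq 0)).mp hv0
    filter_upwards [h0] with ω hω
    have : X 0 ω ^ 2 = 0 := by simpa using hω
    simpa using (pow_eq_zero_iff (two_ne_zero)).mp this
  -- increments
  have hdiff : ∀ f g : 𝓗,
      Measure.map (fun ω => fun _ : Fin 1 => X (f - g) ω) ℙ =
      Measure.map (fun ω => fun _ : Fin 1 => X f ω - X g ω) ℙ := by
    intro f g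
    have hmap := hSI2 (-g) 1 (fun _ => f) (fun _ => g)
    rw [show f + -g = f - g from (sub_eq_add_neg f g).symm] at hmap
    simp only [add_neg_cancel] at hmap
    rw [← hmap]
    apply Measure.map_congr
    filter_upwards [hX0] with ω hω
    have h0 : X 0 ω = 0 := by simpa using hω
    funext i
    simp [h0]
  have hmdiff : ∀ f g : 𝓗, m (f - g) = m f - m g := by
    intro f g
    have h1 := (moments_of_map_eq (hXm _) ((hXm f).sub (hXm g)) (hdiff f g)).1
    exact h1.trans (integral_sub (hXi f) (hXi g))
  have hvdiff : ∀ f g : 𝓗, v (f - g) = ∫ ω, (X f ω - X g ω) ^ 2 ∂ℙ := by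
    intro f g
    exact (moments_of_map_eq (hXm _) ((hXm f).sub (hXm g)) (hdiff f g)).2
  -- mean zero
  have hmzero : ∀ f : 𝓗, m f = 0 := by
    intro f
    have h1 : m (-f) = m f := (hnormeq (-f) f (norm_neg f)).1
    have h2 : m (f - -f) = m f - m (-f) := hmdiff f (-f)
    have h3 : f - -f = (2:ℝ) • f := by rw [sub_neg_eq_add, two_smul]
    have h4 : m ((2:ℝ) • f) = ((2:ℝ) ^ 2) ^ H * m f := (hscale 2 two_ne_zero f).1
    rw [h3, h4, h1] at h2
    have h5 : ((2:ℝ) ^ 2) ^ H * m f = 0 := by linarith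
    rcases mul_eq_zero.mp h5 with h | h
    · linarith
    · exact h
  -- variance
  obtain ⟨x0, hx0⟩ := exists_ne (0 : 𝓗)
  have hf₀1 : ‖(‖x0‖⁻¹ • x0 : 𝓗)‖ = 1 := norm_smul_inv_norm hx0
  set σ2 : ℝ := v (‖x0‖⁻¹ • x0) with hσ2
  have hσnn : 0 ≤ σ2 := integral_nonneg fun ω => sq_nonneg _
  have hvunit : ∀ u : 𝓗, ‖u‖ = 1 → v u = σ2 := fun u hu =>
    (hnormeq u _ (by rw [hu, hf₀1])).2
  have hrpow : ∀ t : ℝ, 0 ≤ t → ((t ^ 2) ^ H) ^ 2 = t ^ (4 * H) := by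
    intro t ht
    rw [← Real.rpow_natCast t 2, ← Real.rpow_natCast ((t ^ ((2:ℕ):ℝ)) ^ H) 2,
      ← Real.rpow_mul ht, ← Real.rpow_mul ht]
    congr 1
    push_cast
    ring
  have hvf : ∀ f : 𝓗, v f = σ2 * ‖f‖ ^ (4 * H) := by
    intro f
    by_cases hf : f = 0
    · rw [hf, hv0, norm_zero, Real.zero_rpow (by positivity), mul_zero]
    · have hfne : ‖f‖ ≠ 0 := norm_ne_zero_iff.mpr hf
      have hu1 : ‖(‖f‖⁻¹ • f : 𝓗)‖ = 1 := norm_smul_inv_norm hf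
      have h1 : (‖f‖ : ℝ) • (‖f‖⁻¹ • f) = f := by
        rw [smul_smul, mul_inv_cancel₀ hfne, one_smul]
      have h2 := (hscale ‖f‖ hfne (‖f‖⁻¹ • f)).2
      rw [h1, hvunit _ hu1, hrpow _ (norm_nonneg f)] at h2
      rw [h2]; ring
  -- covariance
  have hcov : ∀ f g : 𝓗, ∫ ω, X f ω * X g ω ∂ℙ = (v f + v g - v (f - g)) / 2 := by
    intro f g
    have hexp : ∫ ω, (X f ω - X g ω) ^ 2 ∂ℙ
        = v f - 2 * ∫ ω, X f ω * X g ω ∂ℙ + v g := by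
      have hpt : ∀ ω, (X f ω - X g ω) ^ 2
          = X f ω ^ 2 - 2 * (X f ω * X g ω) + X g ω ^ 2 := fun ω => by ring
      simp_rw [hpt]
      have hi2 : Integrable (fun ω => 2 * (X f ω * X g ω)) ℙ := (hmul f g).const_mul 2
      have hi1 : Integrable (fun ω => X f ω ^ 2 - 2 * (X f ω * X g ω)) ℙ := (hXsq f).sub hi2
      rw [integral_add hi1 (hXsq g), integral_sub (hXsq f) hi2, integral_const_mul _]
    have := (hvdiff f g).trans hexp
    linarith
  refine ⟨hmzero, σ2, hσnn, fun u hu => hvunit u hu, ?_⟩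
  intro f g
  rw [hcov f g, hvf f, hvf g, hvf (f - g)]
  ring
end

section
/- Let E be a real normed space equipped with its Borel σ-algebra, m a finite Borel measure on E with m({0}) = 0, and Q : E* → ℝ a function on the continuous real-linear functionals satisfying the parallelogram identity Q(ξ + η) + Q(ξ − η) = 2Q(ξ) + 2Q(η) for all ξ, η. Define Φ(ξ) := Q(ξ) + 2∫_E (1 − cos ξ(x)) / min(1, ‖x‖²) dm(x). Then for all ξ, η ∈ E*: 2Φ(ξ) + 2Φ(η) − Φ(ξ + η) − Φ(ξ − η) = ∫_E |exp(i·ξ(x)) + exp(i·η(x)) − exp(i·(ξ+η)(x)) − 1|² / min(1, ‖x‖²) dm(x). -/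
open MeasureTheory

open Complex in
lemma key_pointwise (a b : ℝ) :
    ‖Complex.exp (Complex.I * a) + Complex.exp (Complex.I * b) -
      Complex.exp (Complex.I * ((a : ℝ) + b : ℝ)) - 1‖ ^ 2 =
    4 * (1 - Real.cos a) + 4 * (1 - Real.cos b) - 2 * (1 - Real.cos (a + b))
      - 2 * (1 - Real.cos (a - b)) := by
  rw [Complex.sq_norm]
  simp only [mul_comm Complex.I, Complex.exp_mul_I, Complex.normSq_apply]
  simp only [Complex.add_re, Complex.sub_re, Complex.add_im, Complex.sub_im,
    Complex.mul_re, Complex.mul_im, Complex.I_re, Complex.I_im, Complex.one_re,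
    Complex.one_im, Complex.cos_ofReal_re, Complex.cos_ofReal_im,
    Complex.sin_ofReal_re, Complex.sin_ofReal_im, mul_zero, mul_one, zero_mul,
    sub_zero, zero_sub, add_zero, zero_add]
  rw [Real.cos_add, Real.cos_sub, Real.sin_add]
  linear_combination (Real.sin b ^ 2 + (1 - Real.cos b) ^ 2) * Real.sin_sq_add_cos_sq a + ((1 - Real.cos a ^ 2) + (1 - Real.cos a) ^ 2) * Real.sin_sq_add_cos_sq b

lemma integ_aux (E : Type*) [NormedAddCommGroup E] [NormedSpace ℝ E]
    [MeasurableSpace E] [BorelSpace E]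
    (m : Measure E) [IsFiniteMeasure m] (ξ : E →L[ℝ] ℝ) :
    Integrable (fun x => (1 - Real.cos (ξ x)) / min 1 (‖x‖ ^ 2)) m := by
  have hmeas : AEStronglyMeasurable (fun x => (1 - Real.cos (ξ x)) / min 1 (‖x‖ ^ 2)) m := by
    apply Measurable.aestronglyMeasurable
    exact (measurable_const.sub (Real.measurable_cos.comp ξ.continuous.measurable)).div
      ((measurable_const.min ((measurable_norm.pow measurable_const)))) 
  refine Integrable.mono' (integrable_const (max 2 (‖ξ‖ ^ 2 / 2))) hmeas ?_
  filter_upwards with x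
  rcases eq_or_ne x 0 with rfl | hx
  · simp [le_max_iff]
  rcases le_or_gt 1 ‖x‖ with h1 | h1
  · have hmin : min 1 (‖x‖ ^ 2) = 1 := min_eq_left (by nlinarith)
    rw [hmin, div_one, Real.norm_eq_abs, abs_le]
    constructor
    · have := Real.cos_le_one (ξ x); nlinarith [le_max_left (2:ℝ) (‖ξ‖^2/2)]
    · have := Real.neg_one_le_cos (ξ x)
      have : (1 : ℝ) - Real.cos (ξ x) ≤ 2 := by linarith
      exact this.trans (le_max_left _ _)
  · have hxn : (0:ℝ) < ‖x‖ := norm_pos_iff.mpr hx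
    have hx2 : (0:ℝ) < ‖x‖ ^ 2 := by positivity
    have hmin : min 1 (‖x‖ ^ 2) = ‖x‖ ^ 2 := min_eq_right (by nlinarith [norm_nonneg x])
    rw [hmin, Real.norm_eq_abs, abs_div, abs_of_pos hx2, div_le_iff₀ hx2]
    have hnum : |1 - Real.cos (ξ x)| ≤ (ξ x) ^ 2 / 2 := by
      rw [_root_.abs_of_nonneg (by linarith [Real.cos_le_one (ξ x)])]
      have := Real.cos_le_one (ξ x)
      nlinarith [Real.one_sub_sq_div_two_le_cos (x := ξ x)]
    have hξ : (ξ x) ^ 2 ≤ ‖ξ‖ ^ 2 * ‖x‖ ^ 2 := by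
      have := ξ.le_opNorm x
      have h0 : |ξ x| ≤ ‖ξ‖ * ‖x‖ := by simpa [Real.norm_eq_abs] using this
      nlinarith [abs_nonneg (ξ x), norm_nonneg ξ, norm_nonneg x, _root_.sq_abs (ξ x)]
    calc |1 - Real.cos (ξ x)| ≤ (ξ x)^2 / 2 := hnum
      _ ≤ ‖ξ‖^2 * ‖x‖^2 / 2 := by linarith
      _ ≤ max 2 (‖ξ‖^2/2) * ‖x‖^2 := by
          have := le_max_right (2:ℝ) (‖ξ‖^2/2)
          nlinarith [sq_nonneg ‖x‖]

/-- **Additivity of the drift part: the key quadratic identity.**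
Let `E` be a real normed space with its Borel σ-algebra, `m` a finite Borel measure with
`m {0} = 0`, and `Q` a quadratic (parallelogram) functional on `E*`. For
`Φ ξ = Q ξ + 2 ∫ (1 − cos ξ x) / min 1 ‖x‖² dm`, one has for all `ξ, η`:
`2Φ(ξ) + 2Φ(η) − Φ(ξ+η) − Φ(ξ−η)
  = ∫ |exp(iξx) + exp(iηx) − exp(i(ξ+η)x) − 1|² / min 1 ‖x‖² dm`. -/
theorem drift_additivity_identity
    (E : Type*) [NormedAddCommGroup E] [NormedSpace ℝ E]
    [MeasurableSpace E] [BorelSpace E]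
    (m : Measure E) [IsFiniteMeasure m] (hm0 : m {0} = 0)
    (Q : (E →L[ℝ] ℝ) → ℝ)
    (hQ : ∀ ξ η : E →L[ℝ] ℝ, Q (ξ + η) + Q (ξ - η) = 2 * Q ξ + 2 * Q η)
    (Φ : (E →L[ℝ] ℝ) → ℝ)
    (hΦ : ∀ ξ : E →L[ℝ] ℝ,
      Φ ξ = Q ξ + 2 * ∫ x, (1 - Real.cos (ξ x)) / min 1 (‖x‖ ^ 2) ∂m) :
    ∀ ξ η : E →L[ℝ] ℝ,
      2 * Φ ξ + 2 * Φ η - Φ (ξ + η) - Φ (ξ - η) =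
        ∫ x, ‖Complex.exp (Complex.I * (ξ x : ℂ)) +
            Complex.exp (Complex.I * (η x : ℂ)) -
            Complex.exp (Complex.I * ((ξ + η) x : ℂ)) - 1‖ ^ 2 / min 1 (‖x‖ ^ 2) ∂m := by
  intro ξ η
  have h1 := integ_aux E m ξ
  have h2 := integ_aux E m η
  have h3 := integ_aux E m (ξ + η)
  have h4 := integ_aux E m (ξ - η)
  have hq := hQ ξ η
  have hI : 4 * (∫ x, (1 - Real.cos (ξ x)) / min 1 (‖x‖ ^ 2) ∂m)
      + 4 * (∫ x, (1 - Real.cos (η x)) / min 1 (‖x‖ ^ 2) ∂m)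
      - 2 * (∫ x, (1 - Real.cos ((ξ + η) x)) / min 1 (‖x‖ ^ 2) ∂m)
      - 2 * (∫ x, (1 - Real.cos ((ξ - η) x)) / min 1 (‖x‖ ^ 2) ∂m)
      = ∫ x, ‖Complex.exp (Complex.I * (ξ x : ℂ)) +
            Complex.exp (Complex.I * (η x : ℂ)) -
            Complex.exp (Complex.I * ((ξ + η) x : ℂ)) - 1‖ ^ 2 / min 1 (‖x‖ ^ 2) ∂m := by
    have hsum : ∫ x, (4 * ((1 - Real.cos (ξ x)) / min 1 (‖x‖ ^ 2))
        + 4 * ((1 - Real.cos (η x)) / min 1 (‖x‖ ^ 2))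
        - 2 * ((1 - Real.cos ((ξ + η) x)) / min 1 (‖x‖ ^ 2))
        - 2 * ((1 - Real.cos ((ξ - η) x)) / min 1 (‖x‖ ^ 2))) ∂m
        = 4 * (∫ x, (1 - Real.cos (ξ x)) / min 1 (‖x‖ ^ 2) ∂m)
          + 4 * (∫ x, (1 - Real.cos (η x)) / min 1 (‖x‖ ^ 2) ∂m)
          - 2 * (∫ x, (1 - Real.cos ((ξ + η) x)) / min 1 (‖x‖ ^ 2) ∂m)
          - 2 * (∫ x, (1 - Real.cos ((ξ - η) x)) / min 1 (‖x‖ ^ 2) ∂m) := by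
      rw [integral_sub, integral_sub, integral_add,
        MeasureTheory.integral_const_mul, MeasureTheory.integral_const_mul,
        MeasureTheory.integral_const_mul, MeasureTheory.integral_const_mul]
      exacts [h1.const_mul 4, h2.const_mul 4,
        (h1.const_mul 4).add (h2.const_mul 4), h3.const_mul 2,
        ((h1.const_mul 4).add (h2.const_mul 4)).sub (h3.const_mul 2), h4.const_mul 2]
    rw [← hsum]
    refine integral_congr_ae (Filter.Eventually.of_forall fun x => ?_)
    simp only [ContinuousLinearMap.add_apply, ContinuousLinearMap.sub_apply]
    rw [key_pointwise (ξ x) (η x)]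
    ring
  rw [hΦ ξ, hΦ η, hΦ (ξ + η), hΦ (ξ - η)]
  linarith [hq, hI]
end

section
/- Let H ∈ (0, 1/2], d ≥ 1, and let λ denote Lebesgue measure on ℝ^d. Let (Ω, ℱ, ℙ) be a probability space and X : ℝ₊^d → Ω → ℝ a process such that: (i) for every pair s, u ∈ ℝ₊^d, the joint law on ℝ² of ω ↦ (X(s)(ω), X(u)(ω)) is a centered Gaussian measure; (ii) for all s, u ∈ ℝ₊^d, E[X(s)·X(u)] = ½(λ([0,s])^{2H} + λ([0,u])^{2H} − λ([0,s] △ [0,u])^{2H}), where [0,s] = ∏_k [0, s_k] and △ denotes symmetric difference. Then for all t, t', τ ∈ ℝ₊^d with t ≼ t' (componentwise) and λ([0,t'] \ [0,t]) = λ([0,τ]), the law of X(t') − X(t) equals the law of X(τ). -/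
open MeasureTheory
open scoped NNReal ENNReal

section Aux
open ProbabilityTheory Real

lemma integrable_sq_gaussianReal (v : ℝ≥0) :
    Integrable (fun x : ℝ => x ^ 2) (gaussianReal 0 v) := by
  by_cases hv : v = 0
  · rw [hv, gaussianReal_zero_var]
    exact (integrable_const _).congr (MeasureTheory.ae_eq_dirac (fun x : ℝ => x ^ 2)).symm
  · rw [gaussianReal_of_var_ne_zero 0 hv, integrable_withDensity_iff (measurable_gaussianPDF 0 v)
      (Filter.Eventually.of_forall fun x => ENNReal.ofReal_lt_top)]
    have hb : 0 < ((2 : ℝ) * v)⁻¹ := by positivity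
    have h := (integrable_rpow_mul_exp_neg_mul_sq hb (s := 2) (by norm_num)).const_mul
      ((Real.sqrt (2 * π * v))⁻¹)
    refine h.congr (Filter.Eventually.of_forall fun x => ?_)
    dsimp only
    rw [show gaussianPDF 0 v x = ENNReal.ofReal (gaussianPDFReal 0 v x) from rfl, ENNReal.toReal_ofReal (gaussianPDFReal_nonneg 0 v x), gaussianPDFReal]
    rw [show ((x:ℝ) ^ (2:ℝ)) = x ^ (2:ℕ) from by rw [← Real.rpow_natCast x 2]; norm_num, sub_zero]
    ring_nf

lemma integral_sq_gaussianReal (v : ℝ≥0) :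
    ∫ x, x ^ 2 ∂(gaussianReal 0 v)
      = v * ∫ x, x ^ 2 ∂(gaussianReal 0 (1 : ℝ≥0)) := by
  have h := gaussianReal_map_const_mul (μ := 0) (v := 1) (Real.sqrt v)
  have hv : (⟨(Real.sqrt v) ^ 2, sq_nonneg _⟩ : ℝ≥0) * 1 = v := by
    ext
    push_cast
    rw [Real.sq_sqrt v.coe_nonneg, mul_one]
    rfl
  rw [mul_zero, show NNReal.mk _ _ * 1 = v from hv] at h
  rw [← h, integral_map (by fun_prop) (by fun_prop)]
  simp_rw [mul_pow, Real.sq_sqrt v.coe_nonneg]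
  rw [integral_const_mul]


lemma integral_sq_gaussianReal_one_pos :
    0 < ∫ x, x ^ 2 ∂(gaussianReal 0 (1 : ℝ≥0)) := by
  rw [integral_pos_iff_support_of_nonneg (fun x => sq_nonneg x)
    (integrable_sq_gaussianReal 1)]
  have hsupp : Function.support (fun x : ℝ => x ^ 2) = {(0:ℝ)}ᶜ := by
    ext x; simp [Function.mem_support, pow_eq_zero_iff]
  rw [hsupp]
  have h0 : gaussianReal 0 (1 : ℝ≥0) {(0:ℝ)} = 0 :=
    gaussianReal_absolutelyContinuous 0 one_ne_zero (Real.volume_singleton)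
  have := measure_compl (MeasurableSet.singleton (0:ℝ)) (measure_ne_top (gaussianReal 0 (1:ℝ≥0)) _)
  rw [h0, tsub_zero, measure_univ] at this
  rw [this]
  norm_num


end Aux

/-- A measure on `Fin 2 → ℝ` is a centered Gaussian law if all its one-dimensional
continuous linear projections are (possibly degenerate) centered Gaussian laws on `ℝ`. -/
def IsCenteredGaussianLaw2 (μ : Measure (Fin 2 → ℝ)) : Prop :=
  ∀ l : (Fin 2 → ℝ) →L[ℝ] ℝ, ∃ v : NNReal,
    μ.map l = ProbabilityTheory.gaussianReal 0 v

/-- **Measure increment stationarity of the multiparameter fractional Brownian motion.**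
For `H ∈ (0, 1/2]`, a process on `ℝ₊^d` whose two-dimensional marginals are centered Gaussian
and whose covariance is `½(λ[0,s]^{2H} + λ[0,u]^{2H} − λ([0,s] ∆ [0,u])^{2H})` satisfies: if
`t ≼ t'` and `λ([0,t'] \ [0,t]) = λ([0,τ])`, then `X t' − X t` has the law of `X τ`. -/
theorem mpfBm_measure_increment_stationarity
    (H : ℝ) (hH : H ∈ Set.Ioc (0 : ℝ) (1 / 2))
    (d : ℕ) (hd : 1 ≤ d)
    (Ω : Type*) [MeasurableSpace Ω] (ℙ : Measure Ω) [IsProbabilityMeasure ℙ]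
    (X : (Fin d → ℝ) → Ω → ℝ)
    (hGauss : ∀ s u : Fin d → ℝ, 0 ≤ s → 0 ≤ u →
      IsCenteredGaussianLaw2 (Measure.map (fun ω => ![X s ω, X u ω]) ℙ))
    (hcov : ∀ s u : Fin d → ℝ, 0 ≤ s → 0 ≤ u →
      ∫ ω, X s ω * X u ω ∂ℙ =
        ((volume (Set.Icc 0 s)).toReal ^ (2 * H) + (volume (Set.Icc 0 u)).toReal ^ (2 * H) -
          (volume (symmDiff (Set.Icc 0 s) (Set.Icc 0 u))).toReal ^ (2 * H)) / 2) :
    ∀ t t' τ : Fin d → ℝ, 0 ≤ t → t ≤ t' → 0 ≤ τ →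
      volume (Set.Icc 0 t' \ Set.Icc 0 t) = volume (Set.Icc 0 τ) →
      Measure.map (fun ω => X t' ω - X t ω) ℙ = Measure.map (X τ) ℙ := by
  intro t t' τ ht htt' hτ hvol
  have ht' : 0 ≤ t' := le_trans ht htt'
  -- AEMeasurability of the pairs
  have hpair : ∀ s u : Fin d → ℝ, 0 ≤ s → 0 ≤ u →
      AEMeasurable (fun ω => ![X s ω, X u ω]) ℙ := by
    intro s u hs hu
    by_contra hnm
    obtain ⟨v, hv⟩ := hGauss s u hs hu 0
    rw [Measure.map_of_not_aemeasurable hnm, Measure.map_zero] at hv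
    exact (IsProbabilityMeasure.ne_zero (ProbabilityTheory.gaussianReal 0 v)) hv.symm
  have hXae : ∀ s : Fin d → ℝ, 0 ≤ s → AEMeasurable (X s) ℙ := by
    intro s hs
    have h := (measurable_pi_apply (0 : Fin 2)).comp_aemeasurable (hpair s s hs hs)
    exact h
  -- laws of linear images
  have hlaw : ∀ s u : Fin d → ℝ, 0 ≤ s → 0 ≤ u → ∀ l : (Fin 2 → ℝ) →L[ℝ] ℝ, ∃ v : NNReal,
      Measure.map (fun ω => l ![X s ω, X u ω]) ℙ = ProbabilityTheory.gaussianReal 0 v := by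
    intro s u hs hu l
    obtain ⟨v, hv⟩ := hGauss s u hs hu l
    exact ⟨v, by
      rw [← hv,
        AEMeasurable.map_map_of_aemeasurable l.continuous.measurable.aemeasurable
          (hpair s u hs hu)]
      rfl⟩
  set l₀ : (Fin 2 → ℝ) →L[ℝ] ℝ := ContinuousLinearMap.proj (R := ℝ) (φ := fun _ : Fin 2 => ℝ) 0 with hl₀
  set l₁ : (Fin 2 → ℝ) →L[ℝ] ℝ :=
    ContinuousLinearMap.proj (R := ℝ) (φ := fun _ : Fin 2 => ℝ) 0 -
      ContinuousLinearMap.proj (R := ℝ) (φ := fun _ : Fin 2 => ℝ) 1 with hl₁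
  obtain ⟨v₁, hv₁⟩ := hlaw t' t ht' ht l₁
  have hv₁' : Measure.map (fun ω => X t' ω - X t ω) ℙ = ProbabilityTheory.gaussianReal 0 v₁ := by
    have heq : (fun ω => l₁ ![X t' ω, X t ω]) = (fun ω => X t' ω - X t ω) := by
      funext ω; simp [hl₁]
    rw [← heq]
    exact hv₁
  obtain ⟨v₂, hv₂⟩ := hlaw τ τ hτ hτ l₀
  have hv₂' : Measure.map (X τ) ℙ = ProbabilityTheory.gaussianReal 0 v₂ := by
    have heq : (fun ω => l₀ ![X τ ω, X τ ω]) = X τ := by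
      funext ω; simp [hl₀]
    rw [← heq]
    exact hv₂
  -- Memℒp 2
  have hmem : ∀ s : Fin d → ℝ, 0 ≤ s → MemLp (X s) 2 ℙ := by
    intro s hs
    obtain ⟨v, hv⟩ := hlaw s s hs hs l₀
    have hvs : Measure.map (X s) ℙ = ProbabilityTheory.gaussianReal 0 v := by
      have heq : (fun ω => l₀ ![X s ω, X s ω]) = X s := by
        funext ω; simp [hl₀]
      rw [← heq]
      exact hv
    have h2 : MemLp (id : ℝ → ℝ) 2 (Measure.map (X s) ℙ) := by
      rw [hvs]
      exact (memLp_two_iff_integrable_sq aestronglyMeasurable_id).2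
        (by simpa using integrable_sq_gaussianReal v)
    simpa [Function.comp] using (memLp_map_measure_iff aestronglyMeasurable_id (hXae s hs)).1 h2
  -- second moments via the law
  have hsecond : ∀ (f : Ω → ℝ) (v : ℝ≥0), AEMeasurable f ℙ →
      Measure.map f ℙ = ProbabilityTheory.gaussianReal 0 v →
      ∫ ω, (f ω) ^ 2 ∂ℙ = v * ∫ x, x ^ 2 ∂(ProbabilityTheory.gaussianReal 0 (1 : ℝ≥0)) := by
    intro f v hf hlawf
    rw [← integral_sq_gaussianReal, ← hlawf,
      integral_map hf (by fun_prop)]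
  -- covariance values
  have h2H : (2 * H) ≠ 0 := by
    have := hH.1; positivity
  have hzero : ∀ s : Fin d → ℝ,
      (volume (symmDiff (Set.Icc 0 s) (Set.Icc 0 s))).toReal ^ (2 * H) = 0 := by
    intro s
    rw [symmDiff_self]
    simp [Real.zero_rpow h2H]
  set a := (volume (Set.Icc (0 : Fin d → ℝ) t)).toReal ^ (2 * H) with ha
  set b := (volume (Set.Icc (0 : Fin d → ℝ) t')).toReal ^ (2 * H) with hb
  set m := (volume (Set.Icc (0 : Fin d → ℝ) τ)).toReal ^ (2 * H) with hm
  have hsub : Set.Icc (0 : Fin d → ℝ) t ≤ Set.Icc 0 t' := Set.Icc_subset_Icc le_rfl htt'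
  have hsd : (volume (symmDiff (Set.Icc (0 : Fin d → ℝ) t) (Set.Icc 0 t'))).toReal ^ (2 * H)
      = m := by
    rw [symmDiff_of_le hsub]
    rw [show (Set.Icc (0 : Fin d → ℝ) t' \ Set.Icc 0 t : Set (Fin d → ℝ))
        = Set.Icc 0 t' \ Set.Icc 0 t from rfl, hvol]
  have hEt't' : ∫ ω, X t' ω * X t' ω ∂ℙ = b := by
    rw [hcov t' t' ht' ht', hzero t']; ring
  have hEtt : ∫ ω, X t ω * X t ω ∂ℙ = a := by
    rw [hcov t t ht ht, hzero t]; ring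
  have hEττ : ∫ ω, X τ ω * X τ ω ∂ℙ = m := by
    rw [hcov τ τ hτ hτ, hzero τ]; ring
  have hEtt' : ∫ ω, X t ω * X t' ω ∂ℙ = (a + b - m) / 2 := by
    rw [hcov t t' ht ht', hsd]
  have hEt't : ∫ ω, X t' ω * X t ω ∂ℙ = (b + a - m) / 2 := by
    rw [hcov t' t ht' ht, symmDiff_comm, hsd]
  -- integrability of products
  have hmt := hmem t ht
  have hmt' := hmem t' ht'
  have hIprod : ∀ (f g : Ω → ℝ), MemLp f 2 ℙ → MemLp g 2 ℙ →
      Integrable (fun ω => f ω * g ω) ℙ := by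
    intro f g hf hg
    have h := (((hf.add hg).integrable_sq.sub hf.integrable_sq).sub hg.integrable_sq).div_const 2
    refine h.congr (Filter.Eventually.of_forall fun ω => ?_)
    simp only [Pi.sub_apply, Pi.add_apply]
    ring
  -- compute the second moment of the increment
  have hEf : ∫ ω, (X t' ω - X t ω) ^ 2 ∂ℙ = m := by
    have hrw : (fun ω => (X t' ω - X t ω) ^ 2)
        = fun ω => X t' ω * X t' ω - X t' ω * X t ω - (X t ω * X t' ω - X t ω * X t ω) := by
      funext ω; ring
    have hA : Integrable (fun ω => X t' ω * X t' ω - X t' ω * X t ω) ℙ :=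
      (hIprod _ _ hmt' hmt').sub (hIprod _ _ hmt' hmt)
    have hB : Integrable (fun ω => X t ω * X t' ω - X t ω * X t ω) ℙ :=
      (hIprod _ _ hmt hmt').sub (hIprod _ _ hmt hmt)
    rw [hrw, integral_sub hA hB,
      integral_sub (hIprod _ _ hmt' hmt') (hIprod _ _ hmt' hmt),
      integral_sub (hIprod _ _ hmt hmt') (hIprod _ _ hmt hmt),
      hEt't', hEt't, hEtt', hEtt]
    ring
  have hEg : ∫ ω, (X τ ω) ^ 2 ∂ℙ = m := by
    simp_rw [pow_two]
    exact hEττ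
  -- conclude
  have e1 := hsecond (fun ω => X t' ω - X t ω) v₁ ((hXae t' ht').sub (hXae t ht)) hv₁'
  have e2 := hsecond _ v₂ (hXae τ hτ) hv₂'
  rw [hEf] at e1
  rw [hEg] at e2
  have hvv : v₁ = v₂ := by
    have hs1 := integral_sq_gaussianReal_one_pos
    have : (v₁ : ℝ) = (v₂ : ℝ) :=
      mul_right_cancel₀ (ne_of_gt hs1) (by rw [← e1, ← e2])
    exact NNReal.coe_injective this
  rw [hv₁', hv₂', hvv]
end
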